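/- Let ρ = ⊕_{i∈I} ρ_i be a finite direct sum of irreducible representations ρ_i : Γ → GL(W_i) over a field k, where k^m = ⊕_i W_i. Suppose a group B acts on Hom(Γ, GL_m(k)) by precomposition with automorphisms of Γ, and let Stab[ρ] denote the stabilizer of the GL_m(k)-conjugacy class of ρ. Then the intersection ∩_i Stab[ρ_i] is a finite index subgroup of Stab[ρ]. -/

import Mathlib

open scoped DirectSum

section Aux
variable {k : Type*} [Field k] {m : ℕ} {I : Type*} [Fintype I] [DecidableEq I]
  {W : I → Submodule k (Fin m → k)}

/-- projection onto the `j`-th component of the internal direct sum. -/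
noncomputable def prj (hW : DirectSum.IsInternal W) (j : I) (x : Fin m → k) : W j :=
  (LinearEquiv.ofBijective (DirectSum.coeLinearMap W) hW).symm x j

theorem sum_prj (hW : DirectSum.IsInternal W) (x : Fin m → k) :
    ∑ j, (prj hW j x : Fin m → k) = x := by
  set e := LinearEquiv.ofBijective (DirectSum.coeLinearMap W) hW with he
  have h1 : e (e.symm x) = x := e.apply_symm_apply x
  conv_rhs => rw [← h1]
  have h2 : e.symm x = ∑ j, DirectSum.of (fun i => W i) j (e.symm x j) :=
    (DirectSum.sum_univ_of _).symm
  conv_rhs => rw [h2]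
  rw [map_sum]
  refine Finset.sum_congr rfl fun j _ => ?_
  exact (DirectSum.coeLinearMap_of _ _ _).symm

theorem prj_unique (hW : DirectSum.IsInternal W) (x : Fin m → k) (y : I → (Fin m → k))
    (hy : ∀ l, y l ∈ W l) (hx : x = ∑ l, y l) (j : I) :
    (prj hW j x : Fin m → k) = y j := by
  set e := LinearEquiv.ofBijective (DirectSum.coeLinearMap W) hW with he
  set z : I → (⨁ i, (W i : Type _)) := fun l => DirectSum.of (fun i => W i) l ⟨y l, hy l⟩
    with hz
  have h2 : e.symm x = ∑ l, z l := by
    apply e.injective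
    rw [e.apply_symm_apply]
    have hms : e (∑ l, z l) = ∑ l, e (z l) := map_sum e _ _
    rw [hms, hx]
    refine Finset.sum_congr rfl fun l _ => ?_
    show y l = DirectSum.coeLinearMap W (z l)
    exact (DirectSum.coeLinearMap_of (R := k) (M := Fin m → k) (A := W) l ⟨y l, hy l⟩).symm
  have h3 : (e.symm x) j = ⟨y j, hy j⟩ := by
    rw [h2]
    refine (DFinsupp.finset_sum_apply _ _ _).trans ?_
    rw [Finset.sum_eq_single j]
    · exact DirectSum.of_eq_same _ _
    · intro l _ hl
      exact DirectSum.of_eq_of_ne _ _ _ hl.symm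
    · intro h; exact absurd (Finset.mem_univ j) h
  show ((e.symm x j : W j) : Fin m → k) = y j
  rw [h3]

theorem prj_mem_same (hW : DirectSum.IsInternal W) {i : I} {x : Fin m → k} (hx : x ∈ W i) :
    (prj hW i x : Fin m → k) = x := by
  have := prj_unique hW x (fun l => if l = i then x else 0)
    (fun l => by by_cases h : l = i <;> simp [h, hx]) (by simp) i
  simpa using this

theorem prj_mem_ne (hW : DirectSum.IsInternal W) {i j : I} {x : Fin m → k} (hx : x ∈ W i)
    (hij : j ≠ i) : (prj hW j x : Fin m → k) = 0 := by
  have := prj_unique hW x (fun l => if l = i then x else 0)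
    (fun l => by by_cases h : l = i <;> simp [h, hx]) (by simp) j
  simpa [hij] using this

theorem prj_comm (hW : DirectSum.IsInternal W) (Φ : (Fin m → k) →ₗ[k] (Fin m → k))
    (hΦ : ∀ l, ∀ x ∈ W l, Φ x ∈ W l) (j : I) (x : Fin m → k) :
    (prj hW j (Φ x) : Fin m → k) = Φ (prj hW j x) := by
  refine prj_unique hW (Φ x) (fun l => Φ (prj hW l x))
    (fun l => hΦ l _ (prj hW l x).2) ?_ j
  rw [← map_sum, sum_prj]

/-- A componentwise-injective, component-preserving endomorphism is bijective. -/
theorem ext_bijective (hW : DirectSum.IsInternal W) (F : (Fin m → k) →ₗ[k] (Fin m → k))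
    (hF1 : ∀ l, ∀ x ∈ W l, F x ∈ W l) (hF2 : ∀ l, ∀ x ∈ W l, F x = 0 → x = 0) :
    Function.Bijective F := by
  have hinj : Function.Injective F := by
    rw [← LinearMap.ker_eq_bot, LinearMap.ker_eq_bot']
    intro x hx
    have hz : ∀ j, (prj hW j x : Fin m → k) = 0 := by
      intro j
      refine hF2 j _ (prj hW j x).2 ?_
      have := prj_comm hW F hF1 j x
      rw [hx] at this
      rw [show (prj hW j (0 : Fin m → k) : Fin m → k) = 0 by simp [prj]] at this
      exact this.symm
    have := sum_prj hW x
    rw [Finset.sum_congr rfl fun j _ => hz j] at this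
    simpa using this.symm
  exact ⟨hinj, (LinearMap.injective_iff_surjective).mp hinj⟩

/-- The projection as a linear map. -/
noncomputable def prjL (hW : DirectSum.IsInternal W) (j : I) : (Fin m → k) →ₗ[k] W j :=
  DirectSum.component k I (fun i => W i) j ∘ₗ
    (LinearEquiv.ofBijective (DirectSum.coeLinearMap W) hW).symm.toLinearMap

theorem prjL_apply (hW : DirectSum.IsInternal W) (j : I) (x : Fin m → k) :
    prjL hW j x = prj hW j x := rfl

end Aux

/-- Let `ρ` be a representation of `Γ` on `k^m` which is a finite direct
sum of irreducible subrepresentations on submodules `W i` (`k^m = ⊕ᵢ W i`).  A group `B`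
acts on representations by precomposition with automorphisms `a β` of `Γ`, each of which
sends every element of a generating set `S` of `Γ` to a conjugate of itself.  Then the
intersection of the stabilizers of the classes `[ρᵢ]` is contained in the stabilizer of
`[ρ]` and has finite index in it (the stabilizer of `[ρ]` is covered by finitely many
cosets of the intersection). -/
theorem inter_stab_finite_index_in_stab
    (k : Type*) [Field k] (m : ℕ)
    {Γ B : Type*} [Group Γ] [Group B]
    (a : B →* MulAut Γ)
    (S : Set Γ) (hSgen : Subgroup.closure S = ⊤)
    (hSconj : ∀ (β : B), ∀ s ∈ S, ∃ c : Γ, a β s = c * s * c⁻¹)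
    {I : Type*} [Fintype I] [DecidableEq I]
    (W : I → Submodule k (Fin m → k))
    (hW : DirectSum.IsInternal W)
    (ρ : Γ →* ((Fin m → k) ≃ₗ[k] (Fin m → k)))
    (hinv : ∀ (i : I) (γ : Γ), ∀ x ∈ W i, ρ γ x ∈ W i)
    (hirr : ∀ (i : I) (U : Submodule k (Fin m → k)), U ≤ W i →
      (∀ γ : Γ, ∀ x ∈ U, ρ γ x ∈ U) → U = ⊥ ∨ U = W i)
    -- the stabilizer of the conjugacy class of `ρ`:
    (stabFull : Set B)
    (hstabFull : stabFull = {β : B | ∃ C : (Fin m → k) ≃ₗ[k] (Fin m → k),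
      ∀ (γ : Γ) (x : Fin m → k), ρ (a β γ) (C x) = C (ρ γ x)})
    -- the stabilizer of the conjugacy class of the subrepresentation `ρᵢ` on `W i`:
    (stabSub : I → Set B)
    (hstabSub : ∀ i : I, stabSub i = {β : B | ∃ C : (Fin m → k) ≃ₗ[k] (Fin m → k),
      (∀ x ∈ W i, C x ∈ W i) ∧ ∀ γ : Γ, ∀ x ∈ W i, ρ (a β γ) (C x) = C (ρ γ x)}) :
    (⋂ i : I, stabSub i) ⊆ stabFull ∧
    ∃ T : Finset B, stabFull ⊆ ⋃ τ ∈ T, (fun β => τ * β) '' (⋂ i : I, stabSub i) := by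
  classical
  subst hstabFull
  -- ====== Part 1 ======
  have part1 : (⋂ i : I, stabSub i) ⊆ {β : B | ∃ C : (Fin m → k) ≃ₗ[k] (Fin m → k),
      ∀ (γ : Γ) (x : Fin m → k), ρ (a β γ) (C x) = C (ρ γ x)} := by
    intro β hβ
    have hC : ∀ i, ∃ C : (Fin m → k) ≃ₗ[k] (Fin m → k),
        (∀ x ∈ W i, C x ∈ W i) ∧ ∀ γ : Γ, ∀ x ∈ W i, ρ (a β γ) (C x) = C (ρ γ x) := by
      intro i
      have := Set.mem_iInter.mp hβ i
      rwa [hstabSub i] at this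
    choose C hC1 hC2 using hC
    set F : (Fin m → k) →ₗ[k] (Fin m → k) :=
      ∑ i, (C i).toLinearMap ∘ₗ ((W i).subtype ∘ₗ prjL hW i) with hF
    have hFval : ∀ l, ∀ x ∈ W l, F x = C l x := by
      intro l x hx
      rw [hF, LinearMap.sum_apply, Finset.sum_eq_single l]
      · simp only [LinearMap.comp_apply, Submodule.coe_subtype, prjL_apply]
        rw [prj_mem_same hW hx]; rfl
      · intro i _ hi
        simp only [LinearMap.comp_apply, Submodule.coe_subtype, prjL_apply]
        rw [prj_mem_ne hW hx hi]
        simp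
      · intro h; exact absurd (Finset.mem_univ l) h
    have hF1 : ∀ l, ∀ x ∈ W l, F x ∈ W l := by
      intro l x hx; rw [hFval l x hx]; exact hC1 l x hx
    have hF2 : ∀ l, ∀ x ∈ W l, F x = 0 → x = 0 := by
      intro l x hx h
      rw [hFval l x hx] at h
      have := (C l).injective (by simpa using h)
      simpa using this
    obtain ⟨hFinj, hFsurj⟩ := ext_bijective hW F hF1 hF2
    refine ⟨LinearEquiv.ofBijective F ⟨hFinj, hFsurj⟩, ?_⟩
    intro γ x
    have hx : x ∈ ⨆ i, W i := by
      rw [hW.submodule_iSup_eq_top]; trivial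
    show ρ (a β γ) (F x) = F (ρ γ x)
    refine Submodule.iSup_induction (motive := fun x => ρ (a β γ) (F x) = F (ρ γ x)) W hx ?_ ?_ ?_
    · intro i x hx
      rw [hFval i x hx, hFval i (ρ γ x) (hinv i γ x hx)]
      exact hC2 i γ x hx
    · simp
    · intro u v hu hv
      simp only [map_add, hu, hv]
  refine ⟨part1, ?_⟩
  -- ====== Part 2 ======
  -- the "matching" property: `T` realises an isomorphism `ρᵢ ≅ (β·ρ)ⱼ`
  set Pm : B → I → I → Prop := fun β i j =>
    ∃ T : (Fin m → k) →ₗ[k] (Fin m → k),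
      (∀ x ∈ W i, T x ∈ W j) ∧ (∀ x ∈ W i, T x = 0 → x = 0) ∧
      (Submodule.map T (W i) = W j) ∧
      (∀ γ : Γ, ∀ x ∈ W i, T (ρ γ x) = ρ (a β γ) (T x)) with hPm
  -- Fact A : every β in the full stabilizer admits a matching for each nonzero `i`
  have hA : ∀ β, (∃ C : (Fin m → k) ≃ₗ[k] (Fin m → k),
      ∀ (γ : Γ) (x : Fin m → k), ρ (a β γ) (C x) = C (ρ γ x)) → ∀ i, W i ≠ ⊥ →
      ∃ j, Pm β i j := by
    intro β hβ i hbot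
    obtain ⟨C, hC⟩ := hβ
    obtain ⟨x0, hx0mem, hx0⟩ := Submodule.exists_mem_ne_zero_of_ne_bot hbot
    have hCx0 : C x0 ≠ 0 := fun h => hx0 (by simpa using C.injective (by simpa using h))
    have hsum := sum_prj hW (C x0)
    have hj : ∃ j, (prj hW j (C x0) : Fin m → k) ≠ 0 := by
      by_contra h
      push_neg at h
      have h0 : C x0 = 0 := by
        rw [← hsum]
        exact Finset.sum_eq_zero fun j _ => h j
      exact hCx0 h0
    obtain ⟨j, hj⟩ := hj
    set T : (Fin m → k) →ₗ[k] (Fin m → k) :=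
      (W j).subtype ∘ₗ prjL hW j ∘ₗ (C : (Fin m → k) →ₗ[k] (Fin m → k)) with hT
    have hTval : ∀ x, T x = (prj hW j (C x) : Fin m → k) := fun x => rfl
    have hTcomm : ∀ γ : Γ, ∀ x, T (ρ γ x) = ρ (a β γ) (T x) := by
      intro γ x
      rw [hTval, hTval, ← hC γ x]
      have := prj_comm hW
        ((ρ (a β γ) : (Fin m → k) ≃ₗ[k] (Fin m → k)) : (Fin m → k) →ₗ[k] (Fin m → k))
        (fun l y hy => by simpa using hinv l (a β γ) y hy) j (C x)
      simpa using this
    have hTx0 : T x0 ≠ 0 := by rw [hTval]; exact hj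
    -- injectivity on `W i`
    have hK : W i ⊓ LinearMap.ker T = ⊥ := by
      rcases hirr i (W i ⊓ LinearMap.ker T) inf_le_left (fun γ x hx => by
        refine ⟨hinv i γ x hx.1, ?_⟩
        have h2 : T x = 0 := hx.2
        show (ρ γ) x ∈ LinearMap.ker T
        rw [LinearMap.mem_ker, hTcomm γ x, h2, map_zero]) with h | h
      · exact h
      · exfalso
        have : x0 ∈ W i ⊓ LinearMap.ker T := h.symm ▸ hx0mem
        exact hTx0 this.2
    have hTinj : ∀ x ∈ W i, T x = 0 → x = 0 := by
      intro x hx h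
      have : x ∈ W i ⊓ LinearMap.ker T := ⟨hx, h⟩
      rw [hK] at this
      simpa using this
    -- surjectivity onto `W j`
    have hIm : Submodule.map T (W i) = W j := by
      rcases hirr j (Submodule.map T (W i)) (by
        rintro y ⟨x, hx, rfl⟩
        rw [hTval]
        exact (prj hW j (C x)).2) (by
        rintro γ' y ⟨x, hx, rfl⟩
        refine ⟨ρ ((a β)⁻¹ γ') x, hinv i _ x hx, ?_⟩
        rw [hTcomm, MulAut.apply_inv_self]) with h | h
      · exfalso
        have : T x0 ∈ Submodule.map T (W i) := ⟨x0, hx0mem, rfl⟩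
        rw [h] at this
        exact hTx0 (by simpa using this)
      · exact h
    exact ⟨j, T, fun x hx => by rw [hTval]; exact (prj hW j (C x)).2, hTinj, hIm,
      fun γ x _ => hTcomm γ x⟩
  -- Fact B : two elements matching `i` to the same `j` differ by a stabilizer of `[ρᵢ]`
  have hB : ∀ β τ : B, ∀ i j : I, Pm β i j → Pm τ i j →
      (∃ C : (Fin m → k) ≃ₗ[k] (Fin m → k), (∀ x ∈ W i, C x ∈ W i) ∧
        ∀ γ : Γ, ∀ x ∈ W i, ρ (a (τ⁻¹ * β) γ) (C x) = C (ρ γ x)) := by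
    intro β τ i j hPβ hPτ
    obtain ⟨T, hTmem, hTinj, hTmap, hTcomm⟩ := hPβ
    obtain ⟨Sm, hSmem, hSinj, hSmap, hScomm⟩ := hPτ
    -- `Sm` restricts to a linear isomorphism `W i ≃ W j`
    set Sres : (W i) →ₗ[k] (W j) := Sm.restrict hSmem with hSres
    have hSres_bij : Function.Bijective Sres := by
      constructor
      · intro u v huv
        have h1 : Sm (u : Fin m → k) = Sm (v : Fin m → k) := congrArg Subtype.val huv
        have h2 : Sm ((u : Fin m → k) - v) = 0 := by rw [map_sub, h1, sub_self]
        have h3 : ((u : Fin m → k) - v) = 0 := hSinj _ (sub_mem u.2 v.2) h2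
        exact Subtype.ext (by simpa [sub_eq_zero] using h3)
      · intro y
        have : (y : Fin m → k) ∈ Submodule.map Sm (W i) := hSmap.symm ▸ y.2
        obtain ⟨x, hx, hxy⟩ := this
        exact ⟨⟨x, hx⟩, Subtype.ext hxy⟩
    set σ := LinearEquiv.ofBijective Sres hSres_bij with hσ
    set Tres : (W i) →ₗ[k] (W j) := T.restrict hTmem with hTres
    set C₀ : (W i) →ₗ[k] (W i) := σ.symm.toLinearMap ∘ₗ Tres with hC₀
    have hC₀inj : Function.Injective C₀ := by
      intro u v huv
      have h1 : σ.symm (Tres u) = σ.symm (Tres v) := huv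
      have h2 : Tres u = Tres v := σ.symm.injective h1
      have h3 : T ((u : Fin m → k)) = T (v : Fin m → k) := congrArg Subtype.val h2
      have h4 : T ((u : Fin m → k) - v) = 0 := by rw [map_sub, h3, sub_self]
      have h5 : ((u : Fin m → k) - v) = 0 := hTinj _ (sub_mem u.2 v.2) h4
      exact Subtype.ext (by simpa [sub_eq_zero] using h5)
    -- key relation : S (C₀ z) = T z
    have hR1 : ∀ z : W i, Sm ((C₀ z : Fin m → k)) = T (z : Fin m → k) := by
      intro z
      have h1 : Sres (σ.symm (Tres z)) = Tres z := by
        have := σ.apply_symm_apply (Tres z)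
        exact this
      have h2 : Sm ((σ.symm (Tres z) : Fin m → k)) = (Tres z : Fin m → k) :=
        congrArg Subtype.val h1
      exact h2
    -- extend `C₀` by the identity to a global equivalence
    set F : (Fin m → k) →ₗ[k] (Fin m → k) :=
      (W i).subtype ∘ₗ C₀ ∘ₗ prjL hW i + (LinearMap.id - (W i).subtype ∘ₗ prjL hW i) with hF
    have hFi : ∀ x, ∀ hx : x ∈ W i, F x = (C₀ ⟨x, hx⟩ : Fin m → k) := by
      intro x hx
      have hp : prj hW i x = ⟨x, hx⟩ := Subtype.ext (prj_mem_same hW hx)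
      simp only [hF, LinearMap.add_apply, LinearMap.sub_apply, LinearMap.comp_apply,
        Submodule.coe_subtype, prjL_apply, LinearMap.id_apply, hp]
      abel
    have hFne : ∀ l, l ≠ i → ∀ x ∈ W l, F x = x := by
      intro l hl x hx
      have hp : prj hW i x = 0 := Subtype.ext (by simpa using prj_mem_ne hW hx (Ne.symm hl))
      simp only [hF, LinearMap.add_apply, LinearMap.sub_apply, LinearMap.comp_apply,
        Submodule.coe_subtype, prjL_apply, LinearMap.id_apply, hp]
      simp
    have hF1 : ∀ l, ∀ x ∈ W l, F x ∈ W l := by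
      intro l x hx
      by_cases hl : l = i
      · have hx' : x ∈ W i := hl ▸ hx
        rw [hl, hFi x hx']
        exact (C₀ ⟨x, hx'⟩).2
      · rw [hFne l hl x hx]; exact hx
    have hF2 : ∀ l, ∀ x ∈ W l, F x = 0 → x = 0 := by
      intro l x hx h
      by_cases hl : l = i
      · have hx' : x ∈ W i := hl ▸ hx
        rw [hFi x hx'] at h
        have h1 : C₀ ⟨x, hx'⟩ = 0 := Subtype.ext (by simpa using h)
        have h2 : (⟨x, hx'⟩ : W i) = (0 : W i) := hC₀inj (by rw [h1, map_zero])
        simpa using congrArg Subtype.val h2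
      · rw [hFne l hl x hx] at h; exact h
    obtain ⟨hFinj, hFsurj⟩ := ext_bijective hW F hF1 hF2
    refine ⟨LinearEquiv.ofBijective F ⟨hFinj, hFsurj⟩, ?_, ?_⟩
    · intro x hx
      show F x ∈ W i
      exact hF1 i x hx
    · intro γ x hx
      show ρ (a (τ⁻¹ * β) γ) (F x) = F (ρ γ x)
      have hρx : ρ γ x ∈ W i := hinv i γ x hx
      rw [hFi x hx, hFi (ρ γ x) hρx]
      -- both sides lie in `W i`; compare after applying the injective-on-`W i` map `Sm`
      have hLmem : ρ (a (τ⁻¹ * β) γ) ((C₀ ⟨x, hx⟩ : Fin m → k)) ∈ W i :=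
        hinv i _ _ (C₀ ⟨x, hx⟩).2
      have hRmem : ((C₀ ⟨ρ γ x, hρx⟩ : Fin m → k)) ∈ W i := (C₀ ⟨ρ γ x, hρx⟩).2
      -- compute the images under Sm
      have hcompat : a τ (a (τ⁻¹ * β) γ) = a β γ := by
        have h1 : a τ (a (τ⁻¹ * β) γ) = (a τ * a (τ⁻¹ * β)) γ := rfl
        rw [h1, ← map_mul, mul_inv_cancel_left]
      have hL : Sm (ρ (a (τ⁻¹ * β) γ) ((C₀ ⟨x, hx⟩ : Fin m → k))) =
          ρ (a β γ) (Sm ((C₀ ⟨x, hx⟩ : Fin m → k))) := by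
        rw [hScomm (a (τ⁻¹ * β) γ) _ (C₀ ⟨x, hx⟩).2, hcompat]
      have hR : Sm ((C₀ ⟨ρ γ x, hρx⟩ : Fin m → k)) = ρ (a β γ) (Sm ((C₀ ⟨x, hx⟩ : Fin m → k))) := by
        rw [hR1, hR1]
        show T (ρ γ x) = ρ (a β γ) (T x)
        exact hTcomm γ x hx
      -- injectivity of Sm on W i
      have hfinal : Sm (ρ (a (τ⁻¹ * β) γ) ((C₀ ⟨x, hx⟩ : Fin m → k)) -
          (C₀ ⟨ρ γ x, hρx⟩ : Fin m → k)) = 0 := by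
        rw [map_sub, hL, hR, sub_self]
      have := hSinj _ (sub_mem hLmem hRmem) hfinal
      rw [sub_eq_zero] at this
      exact this
  -- the trivial case `W i = ⊥`
  have hBbot : ∀ i, W i = ⊥ → ∀ δ : B,
      (∃ C : (Fin m → k) ≃ₗ[k] (Fin m → k), (∀ x ∈ W i, C x ∈ W i) ∧
        ∀ γ : Γ, ∀ x ∈ W i, ρ (a δ γ) (C x) = C (ρ γ x)) := by
    intro i hbot δ
    refine ⟨LinearEquiv.refl k _, fun x hx => by simpa using hx, fun γ x hx => ?_⟩
    rw [hbot] at hx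
    simp only [Submodule.mem_bot] at hx
    subst hx
    simp
  -- ====== the finiteness argument ======
  set f : B → I → I → Bool := fun β i j => decide (Pm β i j) with hf
  set stabF : Set B := {β : B | ∃ C : (Fin m → k) ≃ₗ[k] (Fin m → k),
      ∀ (γ : Γ) (x : Fin m → k), ρ (a β γ) (C x) = C (ρ γ x)} with hstabF
  set pick : (I → I → Bool) → B := fun v =>
    if h : ∃ τ, τ ∈ stabF ∧ f τ = v then h.choose else 1 with hpick
  refine ⟨Finset.image pick Finset.univ, ?_⟩
  intro β hβ
  have hex : ∃ τ, τ ∈ stabF ∧ f τ = f β := ⟨β, hβ, rfl⟩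
  set τ := pick (f β) with hτ
  have hτspec : τ ∈ stabF ∧ f τ = f β := by
    rw [hτ, hpick]
    simp only [dif_pos hex]
    exact hex.choose_spec
  have hδ : τ⁻¹ * β ∈ ⋂ i : I, stabSub i := by
    refine Set.mem_iInter.mpr fun i => ?_
    rw [hstabSub i]
    by_cases hbot : W i = ⊥
    · exact hBbot i hbot (τ⁻¹ * β)
    · obtain ⟨j, hPβ⟩ := hA β hβ i hbot
      have hdec : f τ i j = f β i j := by rw [hτspec.2]
      have hPτ : Pm τ i j := by
        have : decide (Pm τ i j) = decide (Pm β i j) := hdec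
        rw [decide_eq_true hPβ] at this
        exact of_decide_eq_true this
      exact hB β τ i j hPβ hPτ
  refine Set.mem_iUnion₂.mpr ⟨τ, ?_, ⟨τ⁻¹ * β, hδ, by simp⟩⟩
  exact Finset.mem_image.mpr ⟨f β, Finset.mem_univ _, rfl⟩
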